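/- Let W(r) = √(8/3)·sin²(π log r) for 1/e ≤ r ≤ 1 and W(r) = 0 otherwise, so that its derivative is W'(r) = √(8/3)·π·sin(2π log r)/r for 1/e ≤ r ≤ 1 and W'(r) = 0 otherwise. Let h : (0,∞) → [0,∞] be measurable, let λ > 0, let 0 < η ≤ 1, and let n ≥ 4 be a real number. Then ∫₀^η ( ∫₀^∞ h(r) · W'(λ·a·r)² · λ²·a² · r^{n−1} dr ) da ≤ (8/3)·π²·(1 − 1/e) · (1/λ) · ∫_{1/(λ η e)}^∞ h(r) · r^{n−4} dr. -/

import Mathlib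

set_option maxHeartbeats 1000000


open Real MeasureTheory Set
open scoped ENNReal Classical

noncomputable section

/-- The radial window `W(r) = √(8/3) sin²(π log r)` on `[1/e, 1]`, `0` elsewhere. -/
def W0 : ℝ → ℝ := fun r =>
  if (Real.exp 1)⁻¹ ≤ r ∧ r ≤ 1 then Real.sqrt (8 / 3) * (Real.sin (Real.pi * Real.log r)) ^ 2
  else 0

/-- The derivative of `W0`: `W'(r) = √(8/3) π sin(2π log r)/r` on `[1/e, 1]`, `0` elsewhere. -/
def W0' : ℝ → ℝ := fun r =>
  if (Real.exp 1)⁻¹ ≤ r ∧ r ≤ 1 then Real.sqrt (8 / 3) * Real.pi * Real.sin (2 * Real.pi * Real.log r) / r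
  else 0

/-- **Radial window derivative integral bound:**  for measurable `h : (0,∞) → [0,∞]`,
`λ > 0`, `0 < η ≤ 1` and real `n ≥ 4`,
`∫₀^η ∫₀^∞ h(r) W'(λ a r)² λ² a² r^{n−1} dr da
  ≤ (8/3)π²(1 − 1/e)(1/λ) ∫_{1/(ληe)}^∞ h(r) r^{n−4} dr`. -/
theorem radial_window_deriv_integral_le (h : ℝ → ℝ≥0∞) (hmeas : Measurable h)
    (L : ℝ) (hL : 0 < L) (η : ℝ) (hη0 : 0 < η) (hη1 : η ≤ 1)
    (n : ℝ) (hn : 4 ≤ n) :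
    (∫⁻ a in Set.Ioc (0 : ℝ) η,
        ∫⁻ r in Set.Ioi (0 : ℝ),
          h r * ENNReal.ofReal ((W0' (L * a * r)) ^ 2 * L ^ 2 * a ^ 2 * r ^ (n - 1))) ≤
      ENNReal.ofReal ((8 / 3) * Real.pi ^ 2 * (1 - 1 / Real.exp 1) * (1 / L)) *
        ∫⁻ r in Set.Ici (1 / (L * η * Real.exp 1)), h r * ENNReal.ofReal (r ^ (n - 4)) := by
  have hE : (0:ℝ) < Real.exp 1 := Real.exp_pos 1
  set C : ℝ := (8 / 3) * Real.pi ^ 2 with hCdef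
  have hC0 : 0 ≤ C := by positivity
  set T : ℝ := 1 / (L * η * Real.exp 1) with hTdef
  have hT0 : 0 < T := by positivity
  set K : ℝ := (8 / 3) * Real.pi ^ 2 * (1 - 1 / Real.exp 1) * (1 / L) with hKdef
  have hK0 : 0 ≤ K := by
    have h1 : 1 / Real.exp 1 ≤ 1 := by
      rw [div_le_one hE]; exact Real.one_le_exp (by norm_num)
    have : 0 ≤ 1 - 1 / Real.exp 1 := by linarith
    positivity
  -- dominating function
  set f : ℝ → ℝ → ℝ≥0∞ := fun a r =>
    if (Real.exp 1)⁻¹ ≤ L * a * r ∧ L * a * r ≤ 1 then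
      h r * ENNReal.ofReal (C * r ^ (n - 3)) else 0 with hfdef
  have hfm : Measurable (Function.uncurry f) := by
    apply Measurable.ite
    · have : {p : ℝ × ℝ | (Real.exp 1)⁻¹ ≤ L * p.1 * p.2 ∧ L * p.1 * p.2 ≤ 1}
          = (fun p : ℝ × ℝ => L * p.1 * p.2) ⁻¹' Set.Icc ((Real.exp 1)⁻¹) 1 := by
        ext p; simp [Set.mem_Icc]
      show MeasurableSet {p : ℝ × ℝ | _ ∧ _}
      rw [this]
      exact ((measurable_const.mul measurable_fst).mul measurable_snd) measurableSet_Icc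
    · exact (hmeas.comp measurable_snd).mul
        (ENNReal.measurable_ofReal.comp
          (measurable_const.mul (measurable_snd.pow measurable_const)))
    · exact measurable_const
  -- pointwise bound of the inner integrand
  have hpt : ∀ a ∈ Set.Ioc (0:ℝ) η, ∀ r ∈ Set.Ioi (0:ℝ),
      h r * ENNReal.ofReal ((W0' (L * a * r)) ^ 2 * L ^ 2 * a ^ 2 * r ^ (n - 1)) ≤ f a r := by
    intro a ha r hr
    have har : 0 < a := ha.1
    have hrr : 0 < r := hr
    by_cases hc : (Real.exp 1)⁻¹ ≤ L * a * r ∧ L * a * r ≤ 1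
    · simp only [hfdef, if_pos hc]
      refine mul_le_mul_right (ENNReal.ofReal_le_ofReal ?_) _
      have hs : (0:ℝ) < L * a * r := lt_of_lt_of_le (by positivity) hc.1
      have hW : W0' (L * a * r)
          = Real.sqrt (8/3) * Real.pi * Real.sin (2 * Real.pi * Real.log (L * a * r)) / (L * a * r) := by
        simp only [W0', if_pos hc]
      set θ := Real.sin (2 * Real.pi * Real.log (L * a * r)) with hθ
      have h83 : Real.sqrt (8/3) ^ 2 = 8/3 := Real.sq_sqrt (by norm_num)
      have hsq : W0' (L * a * r) ^ 2 = (8/3) * Real.pi ^ 2 * θ ^ 2 / (L * a * r) ^ 2 := by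
        rw [hW, div_pow, mul_pow, mul_pow, h83]
      have hr13 : r ^ (n - 1) = r ^ (n - 3) * r ^ 2 := by
        rw [show n - 1 = (n - 3) + 2 by ring, Real.rpow_add hrr, Real.rpow_two]
      have hθ2 : θ ^ 2 ≤ 1 := Real.sin_sq_le_one _
      have hrp : 0 ≤ r ^ (n - 3) := Real.rpow_nonneg hrr.le _
      have heq : W0' (L * a * r) ^ 2 * L ^ 2 * a ^ 2 * r ^ (n - 1)
          = C * θ ^ 2 * r ^ (n - 3) := by
        rw [hsq, hr13]
        have hL' : L ≠ 0 := hL.ne'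
        have ha' : a ≠ 0 := har.ne'
        have hr' : r ≠ 0 := hrr.ne'
        field_simp
        ring
      rw [heq]
      nlinarith [sq_nonneg θ, mul_nonneg hC0 hrp]
    · simp only [hfdef, if_neg hc]
      have hW : W0' (L * a * r) = 0 := by simp only [W0', if_neg hc]
      simp [hW]
  -- step 1 : bound LHS by the iterated integral of f
  have step1 : (∫⁻ a in Set.Ioc (0 : ℝ) η,
        ∫⁻ r in Set.Ioi (0 : ℝ),
          h r * ENNReal.ofReal ((W0' (L * a * r)) ^ 2 * L ^ 2 * a ^ 2 * r ^ (n - 1)))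
      ≤ ∫⁻ a in Set.Ioc (0 : ℝ) η, ∫⁻ r in Set.Ioi (0 : ℝ), f a r := by
    refine setLIntegral_mono' measurableSet_Ioc fun a ha => ?_
    exact setLIntegral_mono' measurableSet_Ioi fun r hr => hpt a ha r hr
  -- step 2 : Tonelli
  have step2 : (∫⁻ a in Set.Ioc (0 : ℝ) η, ∫⁻ r in Set.Ioi (0 : ℝ), f a r)
      = ∫⁻ r in Set.Ioi (0 : ℝ), ∫⁻ a in Set.Ioc (0 : ℝ) η, f a r :=
    lintegral_lintegral_swap hfm.aemeasurable
  -- step 3 : bound the inner a-integral pointwise in r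
  have step3 : ∀ r ∈ Set.Ioi (0:ℝ),
      (∫⁻ a in Set.Ioc (0 : ℝ) η, f a r)
        ≤ Set.indicator (Set.Ici T) (fun r => h r * ENNReal.ofReal (K * r ^ (n - 4))) r := by
    intro r hr
    have hrr : 0 < r := hr
    have hSm : MeasurableSet {a : ℝ | (Real.exp 1)⁻¹ ≤ L * a * r ∧ L * a * r ≤ 1} := by
      have : {a : ℝ | (Real.exp 1)⁻¹ ≤ L * a * r ∧ L * a * r ≤ 1}
          = (fun a : ℝ => L * a * r) ⁻¹' Set.Icc ((Real.exp 1)⁻¹) 1 := by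
        ext a; simp [Set.mem_Icc]
      rw [this]
      exact ((measurable_const.mul measurable_id).mul measurable_const) measurableSet_Icc
    have hfi : (fun a => f a r)
        = Set.indicator {a : ℝ | (Real.exp 1)⁻¹ ≤ L * a * r ∧ L * a * r ≤ 1}
            (fun _ => h r * ENNReal.ofReal (C * r ^ (n - 3))) := by
      funext a
      simp only [hfdef, Set.indicator_apply, Set.mem_setOf_eq]
    have hval : (∫⁻ a in Set.Ioc (0 : ℝ) η, f a r)
        = h r * ENNReal.ofReal (C * r ^ (n - 3)) *
            volume ({a : ℝ | (Real.exp 1)⁻¹ ≤ L * a * r ∧ L * a * r ≤ 1} ∩ Set.Ioc 0 η) := by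
      rw [hfi, lintegral_indicator hSm, setLIntegral_const, Measure.restrict_apply hSm]
    rw [hval]
    by_cases hT : T ≤ r
    · -- r ≥ T : bound the measure by the length of the interval
      have hsub : {a : ℝ | (Real.exp 1)⁻¹ ≤ L * a * r ∧ L * a * r ≤ 1} ∩ Set.Ioc 0 η
          ⊆ Set.Icc ((Real.exp 1)⁻¹ / (L * r)) (1 / (L * r)) := by
        rintro a ⟨⟨h1, h2⟩, _⟩
        have hLr : 0 < L * r := by positivity
        constructor
        · rw [div_le_iff₀ hLr]; nlinarith
        · rw [le_div_iff₀ hLr]; nlinarith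
      have hm : volume ({a : ℝ | (Real.exp 1)⁻¹ ≤ L * a * r ∧ L * a * r ≤ 1} ∩ Set.Ioc 0 η)
          ≤ ENNReal.ofReal ((1 - 1 / Real.exp 1) / (L * r)) := by
        refine le_trans (measure_mono hsub) ?_
        rw [Real.volume_Icc]
        apply ENNReal.ofReal_le_ofReal
        rw [div_sub_div_same, one_div, ← one_div (Real.exp 1)]
      calc h r * ENNReal.ofReal (C * r ^ (n - 3)) *
            volume ({a : ℝ | (Real.exp 1)⁻¹ ≤ L * a * r ∧ L * a * r ≤ 1} ∩ Set.Ioc 0 η)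
          ≤ h r * ENNReal.ofReal (C * r ^ (n - 3)) *
              ENNReal.ofReal ((1 - 1 / Real.exp 1) / (L * r)) := mul_le_mul_right hm _
        _ = h r * ENNReal.ofReal (K * r ^ (n - 4)) := by
            rw [mul_assoc, ← ENNReal.ofReal_mul (by positivity)]
            congr 2
            have hrp : r ^ (n - 4) = r ^ (n - 3) / r := by
              rw [show n - 4 = (n - 3) - 1 by ring, Real.rpow_sub hrr, Real.rpow_one]
            rw [hrp, hKdef, hCdef]
            field_simp
        _ ≤ Set.indicator (Set.Ici T) (fun r => h r * ENNReal.ofReal (K * r ^ (n - 4))) r := by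
            rw [Set.indicator_of_mem (Set.mem_Ici.mpr hT)]
    · -- r < T : the set is empty
      push_neg at hT
      have hempty : {a : ℝ | (Real.exp 1)⁻¹ ≤ L * a * r ∧ L * a * r ≤ 1} ∩ Set.Ioc 0 η = ∅ := by
        rw [Set.eq_empty_iff_forall_notMem]
        rintro a ⟨⟨h1, _⟩, ha0, haη⟩
        have hlt : r < 1 / (L * η * Real.exp 1) := hT
        have hle : L * a * r ≤ L * η * r :=
          mul_le_mul_of_nonneg_right (mul_le_mul_of_nonneg_left haη hL.le) hrr.le
        have h2 : L * η * r < L * η * (1 / (L * η * Real.exp 1)) := by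
          apply mul_lt_mul_of_pos_left hlt (by positivity)
        have h3 : L * η * (1 / (L * η * Real.exp 1)) = (Real.exp 1)⁻¹ := by
          field_simp
        rw [h3] at h2
        linarith
      rw [hempty]
      simp
  -- assemble
  calc (∫⁻ a in Set.Ioc (0 : ℝ) η,
        ∫⁻ r in Set.Ioi (0 : ℝ),
          h r * ENNReal.ofReal ((W0' (L * a * r)) ^ 2 * L ^ 2 * a ^ 2 * r ^ (n - 1)))
      ≤ ∫⁻ a in Set.Ioc (0 : ℝ) η, ∫⁻ r in Set.Ioi (0 : ℝ), f a r := step1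
    _ = ∫⁻ r in Set.Ioi (0 : ℝ), ∫⁻ a in Set.Ioc (0 : ℝ) η, f a r := step2
    _ ≤ ∫⁻ r in Set.Ioi (0 : ℝ),
          Set.indicator (Set.Ici T) (fun r => h r * ENNReal.ofReal (K * r ^ (n - 4))) r :=
        setLIntegral_mono' measurableSet_Ioi step3
    _ = ∫⁻ r in Set.Ici T, h r * ENNReal.ofReal (K * r ^ (n - 4)) := by
        rw [lintegral_indicator measurableSet_Ici, Measure.restrict_restrict measurableSet_Ici]
        have hIT : Set.Ici T ∩ Set.Ioi (0:ℝ) = Set.Ici T :=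
          Set.inter_eq_left.mpr fun x hx => lt_of_lt_of_le hT0 hx
        rw [hIT]
    _ = ∫⁻ r in Set.Ici T, ENNReal.ofReal K * (h r * ENNReal.ofReal (r ^ (n - 4))) := by
        congr 1
        funext r
        rw [ENNReal.ofReal_mul hK0]
        ring
    _ = ENNReal.ofReal K * ∫⁻ r in Set.Ici T, h r * ENNReal.ofReal (r ^ (n - 4)) := by
        apply lintegral_const_mul
        exact hmeas.mul (ENNReal.measurable_ofReal.comp (measurable_id.pow measurable_const))
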